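/- Let ν ≥ 1 be an integer. Consider the ℂ-module V = ℂ[[x]]((y)) of formal Laurent series in y with coefficients in ℂ[[x]], the submodule A = ℂ[[x,y]] (series with no negative powers of y), and the submodule B spanned (in the appropriate completed sense) by the monomials x^j y^{j-i-ν} for i, j ≥ 0. Then the quotient V/(A + B) is a ℂ-vector space of dimension ν(ν-1)/2, with basis given by the classes of the monomials x^j y^k for j - ν < k < 0, j ≥ 0. -/

import Mathlib

noncomputable section

/-- The ℂ-module `V = ℂ[[x]]((y))` of formal Laurent series in `y` with coefficients
in `ℂ[[x]]`. -/
abbrev V : Type := LaurentSeries (PowerSeries ℂ)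

/-- The submodule `A = ℂ[[x,y]] ⊂ V`: Laurent series with no negative powers of `y`. -/
def A : Submodule ℂ V where
  carrier := {f | ∀ k : ℤ, k < 0 → f.coeff k = 0}
  zero_mem' := by intro k _; simp
  add_mem' := by
    intro f g hf hg k hk
    simp [HahnSeries.coeff_add, hf k hk, hg k hk]
  smul_mem' := by
    intro c f hf k hk
    simp [HahnSeries.coeff_smul, hf k hk]

/-- The submodule `B ⊂ V` spanned, in the completed sense, by the monomials
`x^j y^{j-i-ν}` for `i, j ≥ 0`: the Laurent series all of whose monomials `x^j y^k`
satisfy `k ≤ j - ν`. -/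
def B (ν : ℕ) : Submodule ℂ V where
  carrier := {f | ∀ (k : ℤ) (j : ℕ), (j : ℤ) - ν < k → (PowerSeries.coeff (R := ℂ) j) (f.coeff k) = 0}
  zero_mem' := by intro k j _; simp
  add_mem' := by
    intro f g hf hg k j h
    simp [HahnSeries.coeff_add, hf k j h, hg k j h]
  smul_mem' := by
    intro c f hf k j h
    simp [HahnSeries.coeff_smul, hf k j h]

/-- The monomial `x^j y^k` as an element of `V`. -/
def monomial (j : ℕ) (k : ℤ) : V := HahnSeries.single k (PowerSeries.X ^ j)

/-! ### Auxiliary material -/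

/-- The index set of the basis. -/
abbrev S' (ν : ℕ) := {p : ℕ × ℤ // (p.1 : ℤ) - ν < p.2 ∧ p.2 < 0}

/-- Enumeration of the index set. -/
def sEquiv (ν : ℕ) : S' ν ≃ Σ s : Fin (ν - 1), Fin (s + 1) where
  toFun p := ⟨⟨((p.1.1 : ℤ) - p.1.2 - 1).toNat, by
      obtain ⟨⟨j, k⟩, h1, h2⟩ := p; simp only at h1 h2 ⊢; omega⟩,
    ⟨p.1.1, by obtain ⟨⟨j, k⟩, h1, h2⟩ := p; simp only at h1 h2 ⊢; omega⟩⟩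
  invFun q := ⟨(q.2.1, (q.2.1 : ℤ) - q.1.1 - 1), by
      obtain ⟨⟨s, hs⟩, ⟨j, hj⟩⟩ := q; simp only at hj ⊢; constructor <;> omega⟩
  left_inv p := by
    obtain ⟨⟨j, k⟩, h1, h2⟩ := p
    exact Subtype.ext (Prod.ext rfl (by simp only; omega))
  right_inv q := by
    obtain ⟨⟨s, hs⟩, ⟨j, hj⟩⟩ := q
    refine Sigma.ext (Fin.ext ?_) ((Fin.heq_ext_iff ?_).mpr ?_) <;> simp only <;> omega

instance (ν : ℕ) : Fintype (S' ν) := Fintype.ofEquiv _ (sEquiv ν).symm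

lemma gauss (n : ℕ) : ∑ i ∈ Finset.range n, (i + 1) = (n + 1) * n / 2 := by
  induction n with
  | zero => simp
  | succ m ih =>
    rw [Finset.sum_range_succ, ih]
    have : (m + 1 + 1) * (m + 1) = (m + 1) * m + 2 * (m + 1) := by ring
    omega

lemma cardS (ν : ℕ) (hν : 1 ≤ ν) : Fintype.card (S' ν) = ν * (ν - 1) / 2 := by
  rw [Fintype.card_congr (sEquiv ν), Fintype.card_sigma]
  simp only [Fintype.card_fin]
  rw [Fin.sum_univ_eq_sum_range (fun i => i + 1) (ν - 1), gauss]
  have h : ν - 1 + 1 = ν := by omega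
  rw [h]

/-- The coefficient-extraction map. -/
def phi (ν : ℕ) : V →ₗ[ℂ] (S' ν → ℂ) where
  toFun f p := PowerSeries.coeff (R := ℂ) p.1.1 (f.coeff p.1.2)
  map_add' f g := funext fun p => by simp [HahnSeries.coeff_add]
  map_smul' c f := funext fun p => by simp [HahnSeries.coeff_smul]

/-- Truncation to negative powers of `y`. -/
def trunc (f : V) : V where
  coeff k := if k < 0 then f.coeff k else 0
  isPWO_support' := f.isPWO_support.mono (by
    intro k hk
    simp only [Function.mem_support] at hk ⊢
    intro h; apply hk; simp [h])

lemma ker_phi (ν : ℕ) : LinearMap.ker (phi ν) = A ⊔ B ν := by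
  apply le_antisymm
  · intro f hf
    simp only [LinearMap.mem_ker] at hf
    rw [Submodule.mem_sup]
    refine ⟨f - trunc f, ?_, trunc f, ?_, by abel⟩
    · intro k hk
      simp [HahnSeries.coeff_sub, trunc, hk]
    · intro k j h
      simp only [trunc]
      split_ifs with hk
      · exact congrFun hf ⟨(j, k), h, hk⟩
      · simp
  · rw [sup_le_iff]
    constructor
    · intro f hf
      simp only [LinearMap.mem_ker]
      funext p
      simp [phi, hf p.1.2 p.2.2]
    · intro f hf
      simp only [LinearMap.mem_ker]
      funext p
      simp [phi, hf p.1.2 p.1.1 p.2.1]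

lemma phi_monomial (ν : ℕ) (p : S' ν) :
    phi ν (monomial p.1.1 p.1.2) = Function.update (0 : S' ν → ℂ) p 1 := by
  funext q
  simp only [phi, monomial, LinearMap.coe_mk, AddHom.coe_mk, HahnSeries.coeff_single,
    Function.update_apply]
  split_ifs with h1 h2 h2
  · rw [h2]; simp [PowerSeries.coeff_X_pow]
  · rw [PowerSeries.coeff_X_pow, if_neg (fun hj => h2 (Subtype.ext (Prod.ext hj h1)))]; simp
  · exact absurd (by rw [h2]) h1
  · simp

lemma phi_surj (ν : ℕ) : Function.Surjective (phi ν) := by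
  intro g
  refine ⟨∑ p : S' ν, g p • monomial p.1.1 p.1.2, ?_⟩
  rw [map_sum]
  funext q
  simp only [Finset.sum_apply, map_smul, phi_monomial]
  simp [Function.update_apply]

/-- The quotient is isomorphic to functions on the index set. -/
def eQuot (ν : ℕ) : (V ⧸ (A ⊔ B ν)) ≃ₗ[ℂ] (S' ν → ℂ) :=
  LinearEquiv.ofBijective ((A ⊔ B ν).liftQ (phi ν) (ker_phi ν).ge)
    ⟨by
      rw [← LinearMap.ker_eq_bot]
      exact Submodule.ker_liftQ_eq_bot _ _ _ (ker_phi ν).le,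
     fun g => by
      obtain ⟨f, hf⟩ := phi_surj ν g
      exact ⟨Submodule.Quotient.mk f, by simpa using hf⟩⟩

lemma eQuot_mk (ν : ℕ) (f : V) :
    eQuot ν (Submodule.Quotient.mk f) = phi ν f := by
  simp [eQuot, LinearEquiv.ofBijective_apply]
  rfl

/-- for `ν ≥ 1`, the quotient `V/(A + B)` is a ℂ-vector space of dimension
`ν(ν-1)/2`, admitting as a basis the classes of the monomials `x^j y^k` for
`j - ν < k < 0`, `j ≥ 0`. -/
theorem stmt1 (ν : ℕ) (hν : 1 ≤ ν) :
    ∃ b : Module.Basis {p : ℕ × ℤ // (p.1 : ℤ) - ν < p.2 ∧ p.2 < 0} ℂ (V ⧸ (A ⊔ B ν)),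
      (∀ p, b p = Submodule.Quotient.mk (monomial p.1.1 p.1.2)) ∧
        Module.finrank ℂ (V ⧸ (A ⊔ B ν)) = ν * (ν - 1) / 2 := by
  refine ⟨Module.Basis.ofEquivFun (eQuot ν), fun p => ?_, ?_⟩
  · rw [Module.Basis.coe_ofEquivFun]
    rw [LinearEquiv.symm_apply_eq, eQuot_mk, phi_monomial]
    rfl
  · rw [Module.finrank_eq_card_basis (Module.Basis.ofEquivFun (eQuot ν)), cardS ν hν]

end
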